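/- Let β > 0 and let l be a real number with 0 < 2l < β. Then −l ∈ D_β if and only if the closed disk {z ∈ ℂ : |z| ≤ l} is contained in D_β ∩ {z ∈ ℂ : 2 Re(z) < β}, where D_β = {z ∈ ℂ : |z² − βz| < β²/4}. -/

import Mathlib

/-- For `0 < 2l < β`, the point `-l` lies in `D_β = {|z² - βz| < β²/4}` if and only if the
closed disk of center `0` and radius `l` is contained in the left lobe
`D_β ∩ {2 Re z < β}`. -/
theorem disk_inclusion_left_lobe (β l : ℝ) (hβ : 0 < β) (hl : 0 < l) (h2l : 2 * l < β) :
    ((-l : ℂ) ∈ {z : ℂ | ‖z ^ 2 - (β : ℂ) * z‖ < β ^ 2 / 4}) ↔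
      Metric.closedBall (0 : ℂ) l ⊆
        {z : ℂ | ‖z ^ 2 - (β : ℂ) * z‖ < β ^ 2 / 4} ∩
          {z : ℂ | 2 * z.re < β} := by
  constructor
  · intro h z hz
    simp only [Metric.mem_closedBall, dist_zero_right] at hz
    have hval : ‖(-l : ℂ) ^ 2 - (β : ℂ) * (-l)‖ = l ^ 2 + β * l := by
      have heq : ((-l : ℂ) ^ 2 - (β : ℂ) * (-l)) = ((l ^ 2 + β * l : ℝ) : ℂ) := by
        push_cast; ring
      rw [heq, Complex.norm_real, Real.norm_eq_abs, abs_of_pos (by positivity)]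
    have h' : l ^ 2 + β * l < β ^ 2 / 4 := by rw [← hval]; exact h
    constructor
    · show ‖z ^ 2 - (β : ℂ) * z‖ < β ^ 2 / 4
      have h1 : ‖z ^ 2 - (β : ℂ) * z‖
          ≤ ‖z ^ 2‖ + ‖(β : ℂ) * z‖ := by
        rw [sub_eq_add_neg]
        refine (norm_add_le _ _).trans_eq ?_
        rw [norm_neg]
      rw [norm_pow, norm_mul, Complex.norm_real, Real.norm_eq_abs, abs_of_pos hβ] at h1
      have h3 : ‖z‖ ^ 2 + β * ‖z‖ ≤ l ^ 2 + β * l := by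
        have := norm_nonneg z
        nlinarith
      linarith
    · show 2 * z.re < β
      have := Complex.re_le_norm z
      linarith
  · intro h
    have hm : (-l : ℂ) ∈ Metric.closedBall (0 : ℂ) l := by
      simp [Complex.norm_real, abs_of_pos hl]
    exact (h hm).1
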